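/- The curvature tensor of the Lie group example (g₄,₅ with a=b=1), with components R₁₂₁₂=R₁₃₁₃=R₁₄₁₄=R₂₃₂₃=R₂₄₂₄=R₃₄₃₄=1 and all others (not obtained from these by symmetries) zero, satisfies R(Sx,Sy,Sz,Su)=R(x,y,z,u) for the skew-circulant structure S (Se₁=−e₄, Se₂=e₁, Se₃=e₂, Se₄=e₃), but does NOT satisfy R(x,y,Sz,Su)=R(x,y,z,u). -/

import Mathlib

/-- The curvature tensor of the Lie group example (𝔤₄,₅ with a = b = 1):
R_{ijkh} = δ_{ik}δ_{jh} − δ_{ih}δ_{jk}, i.e. the nonzero components up to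
symmetries are R₁₂₁₂ = R₁₃₁₃ = R₁₄₁₄ = R₂₃₂₃ = R₂₄₂₄ = R₃₄₃₄ = 1. -/
def Rex (i j k h : Fin 4) : ℝ :=
  (if i = k then (1:ℝ) else 0) * (if j = h then 1 else 0) -
  (if i = h then (1:ℝ) else 0) * (if j = k then 1 else 0)

def pp : Fin 4 → Fin 4 := ![3, 0, 1, 2]
def sg : Fin 4 → ℝ := ![-1, 1, 1, 1]

lemma key (f : Fin 4 → ℝ) (i : Fin 4) :
    (∑ a, f a * (!![0, 1, 0, 0; 0, 0, 1, 0; 0, 0, 0, 1; -1, 0, 0, 0] : Matrix (Fin 4) (Fin 4) ℝ) a i)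
      = sg i * f (pp i) := by
  fin_cases i <;>
    simp [Fin.sum_univ_four, pp, sg, Matrix.vecHead, Matrix.vecTail]

lemma sg_sq (a : Fin 4) : sg a * sg a = 1 := by
  fin_cases a <;> norm_num [sg]

lemma sq_sg (a : Fin 4) : sg a ^ 2 = 1 := by
  fin_cases a <;> norm_num [sg]

lemma pp_inj : ∀ a b : Fin 4, pp a = pp b ↔ a = b := by decide

lemma final (i j k h : Fin 4) :
    sg h * (sg k * (sg j * (sg i * Rex (pp i) (pp j) (pp k) (pp h)))) = Rex i j k h := by
  unfold Rex
  simp only [pp_inj]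
  by_cases h1 : i = k <;> by_cases h2 : j = h <;> by_cases h3 : i = h <;> by_cases h4 : j = k <;>
    subst_vars <;> simp_all <;> ring_nf <;> simp [sq_sg]

theorem example_satisfies_R_but_not_R1
    (S : Matrix (Fin 4) (Fin 4) ℝ)
    (hS : S = !![0, 1, 0, 0; 0, 0, 1, 0; 0, 0, 0, 1; -1, 0, 0, 0]) :
    (∀ i j k h, (∑ a, ∑ b, ∑ c, ∑ d,
        Rex a b c d * S a i * S b j * S c k * S d h) = Rex i j k h) ∧
    ¬ (∀ i j k h, (∑ c, ∑ d, Rex i j c d * S c k * S d h) = Rex i j k h) := by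
  subst hS
  constructor
  · intro i j k h
    simp only [key, ← Finset.mul_sum]
    exact final i j k h
  · intro H
    have h1 := H 0 1 0 1
    simp only [key, ← Finset.mul_sum] at h1
    norm_num [Rex, pp, sg, Matrix.vecHead, Matrix.vecTail] at h1
    have h1 := ((if_neg (by decide) : (if (1 : Fin 4) = 3 then (1:ℝ) else 0) = 0).symm.trans h1)
    norm_num at h1
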